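/- For all real numbers λ ≠ 0 and β > 0, the integral ∫_0^∞ λ β e^{−βt − λ e^{−βt}} / (1 − e^{−λ}) dt equals 1. -/

import Mathlib

open Real MeasureTheory Filter Topology

theorem stmt_12 (lam β : ℝ) (hlam : lam ≠ 0) (hβ : 0 < β) :
    ∫ t in Set.Ioi (0:ℝ),
      lam * β * exp (-(β * t) - lam * exp (-(β * t))) / (1 - exp (-lam)) = 1 := by
  have hne : 1 - exp (-lam) ≠ 0 := by
    rcases lt_or_gt_of_ne hlam with h | h
    · have : 1 < exp (-lam) := by rw [Real.one_lt_exp_iff]; linarith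
      linarith
    · have : exp (-lam) < 1 := by
        rw [Real.exp_lt_one_iff]; linarith
      linarith
  have hd : 0 < lam / (1 - exp (-lam)) := by
    rcases lt_or_gt_of_ne hlam with h | h
    · have h1 : 1 < exp (-lam) := by rw [Real.one_lt_exp_iff]; linarith
      exact div_pos_iff.mpr (Or.inr ⟨h, by linarith⟩)
    · have h1 : exp (-lam) < 1 := by rw [Real.exp_lt_one_iff]; linarith
      exact div_pos_iff.mpr (Or.inl ⟨h, by linarith⟩)
  set g : ℝ → ℝ := fun t => exp (-(lam * exp (-(β * t)))) / (1 - exp (-lam)) with hgdef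
  have hderiv : ∀ t ∈ Set.Ioi (0:ℝ),
      HasDerivAt g (lam * β * exp (-(β * t) - lam * exp (-(β * t))) / (1 - exp (-lam))) t := by
    intro t _
    have h1 : HasDerivAt (fun t : ℝ => -(β * t)) (-β) t := by
      have h := ((hasDerivAt_id t).const_mul β).neg
      rw [mul_one] at h
      exact h
    have h2 := ((h1.exp.const_mul lam).neg).exp.div_const (1 - exp (-lam))
    refine h2.congr_deriv ?_
    symm
    simp only [Pi.neg_apply]
    rw [sub_eq_add_neg, Real.exp_add]
    ring
  have hcont : ContinuousOn g (Set.Ici (0:ℝ)) := by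
    apply Continuous.continuousOn
    fun_prop
  have hnn : ∀ t ∈ Set.Ioi (0:ℝ),
      0 ≤ lam * β * exp (-(β * t) - lam * exp (-(β * t))) / (1 - exp (-lam)) := by
    intro t _
    have : lam * β * exp (-(β * t) - lam * exp (-(β * t))) / (1 - exp (-lam))
        = (lam / (1 - exp (-lam))) * (β * exp (-(β * t) - lam * exp (-(β * t)))) := by
      ring
    rw [this]
    positivity
  have htend : Tendsto g atTop (𝓝 (1 / (1 - exp (-lam)))) := by
    have h1 : Tendsto (fun t : ℝ => -(β * t)) atTop atBot := by
      apply tendsto_neg_atBot_iff.mpr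
      exact Tendsto.const_mul_atTop hβ tendsto_id
    have h2 : Tendsto (fun t : ℝ => exp (-(β * t))) atTop (𝓝 0) :=
      Real.tendsto_exp_atBot.comp h1
    have h3 : Continuous (fun x : ℝ => exp (-(lam * x)) / (1 - exp (-lam))) := by fun_prop
    have := (h3.tendsto 0).comp h2
    simpa [hgdef, Function.comp_def] using this
  have key := integral_Ioi_of_hasDerivAt_of_nonneg (hcont 0 Set.self_mem_Ici) hderiv hnn htend
  rw [key]
  have : g 0 = exp (-lam) / (1 - exp (-lam)) := by simp [hgdef]
  rw [this]
  field_simp
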